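/- Let x : [0,1] → ℝ³ be a continuously differentiable path with x(τ) ≠ 0 for all τ ∈ [0,1], and let t : [0,1] → ℝ be continuously differentiable. Suppose ‖x′(τ)‖ ≤ t′(τ) for all τ ∈ [0,1], ‖x(0)‖ = t(0), and ‖x(1)‖ = t(1). Then for every τ ∈ [0,1] one has ‖x′(τ)‖ = t′(τ) and the Cauchy–Schwarz equality ⟨x(τ), x′(τ)⟩ = ‖x(τ)‖ · ‖x′(τ)‖; in particular x′(τ) and x(τ) are linearly dependent for every τ. -/

import Mathlib

open Set

/-- Equality-forcing step: if `x : [0,1] → ℝ³` is a nonvanishing C¹ path,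
`t : [0,1] → ℝ` is C¹, `‖x'‖ ≤ t'` on `[0,1]` and `‖x(0)‖ = t(0)`,
`‖x(1)‖ = t(1)`, then `‖x'(τ)‖ = t'(τ)` and Cauchy–Schwarz equality
`⟨x(τ), x'(τ)⟩ = ‖x(τ)‖‖x'(τ)‖` hold for all `τ`; in particular `x'(τ)` and
`x(τ)` are linearly dependent for every `τ`. -/
theorem causal_path_on_cone_saturates
    (x x' : ℝ → EuclideanSpace ℝ (Fin 3)) (t t' : ℝ → ℝ)
    (hx : ∀ τ ∈ Icc (0 : ℝ) 1, HasDerivAt x (x' τ) τ)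
    (hx' : ContinuousOn x' (Icc 0 1))
    (ht : ∀ τ ∈ Icc (0 : ℝ) 1, HasDerivAt t (t' τ) τ)
    (ht' : ContinuousOn t' (Icc 0 1))
    (hne : ∀ τ ∈ Icc (0 : ℝ) 1, x τ ≠ 0)
    (hle : ∀ τ ∈ Icc (0 : ℝ) 1, ‖x' τ‖ ≤ t' τ)
    (h0 : ‖x 0‖ = t 0) (h1 : ‖x 1‖ = t 1) :
    ∀ τ ∈ Icc (0 : ℝ) 1,
      ‖x' τ‖ = t' τ ∧
      (inner ℝ (x τ) (x' τ) : ℝ) = ‖x τ‖ * ‖x' τ‖ ∧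
      ∃ c : ℝ, x' τ = c • x τ := by
  set r' : ℝ → ℝ := fun τ => (inner ℝ (x τ) (x' τ) : ℝ) / ‖x τ‖ with hr'def
  -- derivative of the norm
  have hr : ∀ τ ∈ Icc (0 : ℝ) 1, HasDerivAt (fun s => ‖x s‖) (r' τ) τ := by
    intro τ hτ
    have hne' : ‖x τ‖ ≠ 0 := norm_ne_zero_iff.mpr (hne τ hτ)
    have h2 : (‖x τ‖ ^ 2 : ℝ) ≠ 0 := pow_ne_zero _ hne'
    have hs := (Real.hasDerivAt_sqrt h2).comp τ ((hx τ hτ).norm_sq)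
    have heq : (Real.sqrt ∘ fun s => ‖x s‖ ^ 2) = fun s => ‖x s‖ := by
      funext s
      simp [Function.comp, Real.sqrt_sq (norm_nonneg _)]
    rw [heq] at hs
    refine hs.congr_deriv ?_
    symm
    rw [Real.sqrt_sq (norm_nonneg _)]
    field_simp [hr'def]
    simp only [hr'def]
    field_simp
  have hr'le : ∀ τ ∈ Icc (0 : ℝ) 1, r' τ ≤ ‖x' τ‖ := by
    intro τ hτ
    have hpos : 0 < ‖x τ‖ := norm_pos_iff.mpr (hne τ hτ)
    have hcs := real_inner_le_norm (x τ) (x' τ)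
    rw [hr'def, div_le_iff₀ hpos]
    nlinarith
  have hxc : ContinuousOn x (Icc 0 1) :=
    fun τ hτ => (hx τ hτ).continuousAt.continuousWithinAt
  have htc : ContinuousOn t (Icc 0 1) :=
    fun τ hτ => (ht τ hτ).continuousAt.continuousWithinAt
  have hF : ∀ τ ∈ Icc (0 : ℝ) 1,
      HasDerivAt (fun s => t s - ‖x s‖) (t' τ - r' τ) τ :=
    fun τ hτ => (ht τ hτ).sub (hr τ hτ)
  have hFmono : MonotoneOn (fun s => t s - ‖x s‖) (Icc 0 1) := by
    apply monotoneOn_of_hasDerivWithinAt_nonneg (convex_Icc 0 1)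
      (f' := fun τ => t' τ - r' τ)
    · exact htc.sub hxc.norm
    · intro τ hτ
      exact ((hF τ (interior_subset hτ)).hasDerivWithinAt).mono interior_subset
    · intro τ hτ
      have h1' := hle τ (interior_subset hτ)
      have h2' := hr'le τ (interior_subset hτ)
      linarith
  have h01 : (0 : ℝ) ∈ Icc (0 : ℝ) 1 := ⟨le_refl 0, zero_le_one⟩
  have h11 : (1 : ℝ) ∈ Icc (0 : ℝ) 1 := ⟨zero_le_one, le_refl 1⟩
  have hF0 : ∀ τ ∈ Icc (0 : ℝ) 1, t τ - ‖x τ‖ = 0 := by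
    intro τ hτ
    have ha := hFmono h01 hτ hτ.1
    have hb := hFmono hτ h11 hτ.2
    simp only at ha hb
    have e0 : t 0 - ‖x 0‖ = 0 := by rw [h0]; ring
    have e1 : t 1 - ‖x 1‖ = 0 := by rw [h1]; ring
    linarith
  have hderiv0 : ∀ τ ∈ Icc (0 : ℝ) 1, t' τ - r' τ = 0 := by
    intro τ hτ
    have ha : HasDerivWithinAt (fun s => t s - ‖x s‖) (t' τ - r' τ) (Icc 0 1) τ :=
      (hF τ hτ).hasDerivWithinAt
    have hb : HasDerivWithinAt (fun s => t s - ‖x s‖) 0 (Icc 0 1) τ :=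
      (hasDerivWithinAt_const τ (Icc (0:ℝ) 1) (0 : ℝ)).congr
        (fun s hs => hF0 s hs) (hF0 τ hτ)
    have ud := uniqueDiffOn_Icc_zero_one τ hτ
    have e1 := ha.derivWithin ud
    have e2 := hb.derivWithin ud
    rw [← e1]; exact e2
  intro τ hτ
  have hteq : t' τ = r' τ := by have := hderiv0 τ hτ; linarith
  have hnx : 0 < ‖x τ‖ := norm_pos_iff.mpr (hne τ hτ)
  have heq1 : ‖x' τ‖ = t' τ :=
    le_antisymm (hle τ hτ) (by rw [hteq]; exact hr'le τ hτ)
  have hinner : (inner ℝ (x τ) (x' τ) : ℝ) = ‖x τ‖ * ‖x' τ‖ := by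
    have : r' τ = ‖x' τ‖ := by rw [← heq1] at hteq; linarith
    rw [hr'def] at this
    simp only at this
    rw [div_eq_iff hnx.ne'] at this
    rw [this]; ring
  refine ⟨heq1, hinner, ?_⟩
  have hdep : ‖x' τ‖ • x τ = ‖x τ‖ • x' τ := inner_eq_norm_mul_iff_real.mp hinner
  refine ⟨‖x' τ‖ / ‖x τ‖, ?_⟩
  rw [div_eq_inv_mul, mul_smul, hdep, smul_smul, inv_mul_cancel₀ hnx.ne', one_smul]
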